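/- Suppose dim V = 2m is finite. If φ : 𝒢 → 𝒢' is a bijection such that for all X, Y ∈ 𝒢, X and Y are adjacent if and only if φ(X) and φ(Y) are adjacent (i.e., φ is an isomorphism of the Grassmann graphs), then dim V' = 2m, and for all X, Y ∈ 𝒢, X and Y are complementary if and only if φ(X) and φ(Y) are complementary (i.e., φ is an isomorphism of the distant graphs). -/

import Mathlib

open Submodule

/-- `X` belongs to the Grassmannian 𝒢: `X` is isomorphic (as a `K`-vector space)
to the quotient `V ⧸ X`, equivalently to one (hence every) complement of `X`. -/
def InG (K V : Type*) [DivisionRing K] [AddCommGroup V] [Module K V]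
    (X : Submodule K V) : Prop :=
  Nonempty (X ≃ₗ[K] (V ⧸ X))

/-- `quotRank K V A B` is the dimension of the quotient space `B / (A ∩ B)`,
where `A ∩ B` is viewed as a subspace of `B`.  For `A ≤ B` this is `dim (B/A)`. -/
noncomputable def quotRank (K V : Type*) [DivisionRing K] [AddCommGroup V] [Module K V]
    (A B : Submodule K V) : Cardinal :=
  Module.rank K (↥B ⧸ (A.comap B.subtype))

/-- `X` and `Y` are adjacent: `dim ((X+Y)/X) = dim ((X+Y)/Y) = 1`. -/
def Adjacent (K V : Type*) [DivisionRing K] [AddCommGroup V] [Module K V]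
    (X Y : Submodule K V) : Prop :=
  quotRank K V X (X ⊔ Y) = 1 ∧ quotRank K V Y (X ⊔ Y) = 1

section QR
variable {K V : Type*} [DivisionRing K] [AddCommGroup V] [Module K V]

lemma comap_subtype_inf_left (A B : Submodule K V) :
    comap B.subtype (B ⊓ A) = comap B.subtype A := by
  ext x; simp [x.2]

lemma quotRank_self (A : Submodule K V) : quotRank K V A A = 0 := by
  have h : comap A.subtype A = ⊤ := by ext x; simp [x.2]
  rw [quotRank, h]
  have : Subsingleton (↥A ⧸ (⊤ : Submodule K ↥A)) := Submodule.Quotient.subsingleton_iff.2 rfl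
  exact rank_subsingleton' K _

/-- second isomorphism: `quotRank A (B ⊔ A) = quotRank A B`. -/
lemma quotRank_sup_right (A B : Submodule K V) : quotRank K V A (B ⊔ A) = quotRank K V A B := by
  have e := LinearMap.quotientInfEquivSupQuotient B A
  rw [comap_subtype_self, top_inf_eq] at e
  rw [quotRank, quotRank, ← e.rank_eq]

lemma quotRank_sup_left (A B : Submodule K V) : quotRank K V A (A ⊔ B) = quotRank K V A B := by
  rw [sup_comm, quotRank_sup_right]

/-- monotone in the second argument -/
lemma quotRank_mono_right {B C : Submodule K V} (A : Submodule K V) (h : B ≤ C) :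
    quotRank K V A B ≤ quotRank K V A C := by
  set f0 : ↥B →ₗ[K] ↥C ⧸ (A.comap C.subtype) :=
    (A.comap C.subtype).mkQ.comp (Submodule.inclusion h) with hf0
  have hker : LinearMap.ker f0 = A.comap B.subtype := by
    ext x
    simp [hf0, LinearMap.mem_ker, Submodule.Quotient.mk_eq_zero]
  have hinj : Function.Injective ((A.comap B.subtype).liftQ f0 hker.ge) := by
    rw [← LinearMap.ker_eq_bot]
    exact Submodule.ker_liftQ_eq_bot _ _ hker.ge hker.le
  exact LinearMap.rank_le_of_injective _ hinj

/-- antitone in the quotiented submodule (generic module form) -/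
lemma rank_quotient_le_of_le {M : Type*} [AddCommGroup M] [Module K M]
    {p q : Submodule K M} (h : p ≤ q) :
    Module.rank K (M ⧸ q) ≤ Module.rank K (M ⧸ p) := by
  have hsurj : Function.Surjective (p.liftQ q.mkQ (by simpa using h)) := by
    intro x
    obtain ⟨y, rfl⟩ := q.mkQ_surjective x
    exact ⟨p.mkQ y, rfl⟩
  exact (p.liftQ q.mkQ (by simpa using h)).rank_le_of_surjective hsurj

lemma quotRank_anti_left {A₁ A₂ : Submodule K V} (B : Submodule K V) (h : A₁ ≤ A₂) :
    quotRank K V A₂ B ≤ quotRank K V A₁ B :=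
  rank_quotient_le_of_le (comap_mono h)

/-- tower inequality -/
lemma quotRank_tower {A B C : Submodule K V} (hAB : A ≤ B) (hBC : B ≤ C) :
    quotRank K V A C ≤ quotRank K V A B + quotRank K V B C := by
  set p := A.comap C.subtype with hp
  set q := B.comap C.subtype with hq
  have hpq : p ≤ q := comap_mono hAB
  set q' := q.map p.mkQ with hq'
  have e := Submodule.quotientQuotientEquivQuotient p q hpq
  have h1 : Module.rank K ((↥C ⧸ p) ⧸ q') + Module.rank K ↥q' = Module.rank K (↥C ⧸ p) :=
    Submodule.rank_quotient_add_rank q'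
  have h2 : Module.rank K ((↥C ⧸ p) ⧸ q') = quotRank K V B C := e.rank_eq
  -- bound rank q' ≤ quotRank A B
  set g : ↥B →ₗ[K] (↥C ⧸ p) := p.mkQ.comp (Submodule.inclusion hBC) with hg
  have hrange : LinearMap.range g = q' := by
    rw [hg, LinearMap.range_comp, Submodule.range_inclusion]
  have h3 : Module.rank K ↥q' ≤ quotRank K V A B := by
    have e2 : (↥B ⧸ LinearMap.ker g) ≃ₗ[K] ↥q' := hrange ▸ g.quotKerEquivRange
    have hker : A.comap B.subtype ≤ LinearMap.ker g := by
      intro x hx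
      simp only [LinearMap.mem_ker, hg, LinearMap.comp_apply]
      rw [Submodule.mkQ_apply, Submodule.Quotient.mk_eq_zero]
      exact hx
    calc Module.rank K ↥q' = Module.rank K (↥B ⧸ LinearMap.ker g) := e2.symm.rank_eq
      _ ≤ quotRank K V A B := rank_quotient_le_of_le hker
  calc quotRank K V A C = Module.rank K (↥C ⧸ p) := rfl
    _ = quotRank K V B C + Module.rank K ↥q' := by rw [← h2, h1]
    _ ≤ quotRank K V B C + quotRank K V A B := by gcongr
    _ = quotRank K V A B + quotRank K V B C := add_comm _ _
end QR

section QR2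
variable {K V : Type*} [DivisionRing K] [AddCommGroup V] [Module K V]

/-- key subadditivity along an adjacency step -/
lemma quotRank_triangle (X Y Z : Submodule K V) :
    quotRank K V X (X ⊔ Y) ≤ quotRank K V X (X ⊔ Z) + quotRank K V Z (Z ⊔ Y) := by
  have h1 : quotRank K V X (X ⊔ Y) ≤ quotRank K V X (X ⊔ Z ⊔ Y) :=
    quotRank_mono_right X (by exact sup_le (le_sup_of_le_left le_sup_left) le_sup_right)
  have h2 : quotRank K V X (X ⊔ Z ⊔ Y) ≤
      quotRank K V X (X ⊔ Z) + quotRank K V (X ⊔ Z) (X ⊔ Z ⊔ Y) :=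
    quotRank_tower le_sup_left le_sup_left
  have h3 : quotRank K V (X ⊔ Z) (X ⊔ Z ⊔ Y) ≤ quotRank K V Z (Z ⊔ Y) := by
    have he : X ⊔ Z ⊔ Y = (Z ⊔ Y) ⊔ (X ⊔ Z) := by
      rw [sup_comm (Z ⊔ Y)]
      rw [sup_assoc, sup_assoc]
      congr 1
      rw [← sup_assoc, sup_idem, sup_comm]
    calc quotRank K V (X ⊔ Z) (X ⊔ Z ⊔ Y) = quotRank K V (X ⊔ Z) ((Z ⊔ Y) ⊔ (X ⊔ Z)) := by rw [he]
      _ = quotRank K V (X ⊔ Z) (Z ⊔ Y) := quotRank_sup_right _ _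
      _ ≤ quotRank K V Z (Z ⊔ Y) := quotRank_anti_left _ le_sup_right
  exact h1.trans (h2.trans (by gcongr))

/-- `quotRank A ⊤` is the rank of the quotient space. -/
lemma quotRank_top (A : Submodule K V) : quotRank K V A ⊤ = Module.rank K (V ⧸ A) := by
  have e : (↥(⊤ : Submodule K V) ⧸ (A.comap (⊤ : Submodule K V).subtype)) ≃ₗ[K] V ⧸ A := by
    refine Submodule.Quotient.equiv _ _ (Submodule.topEquiv) ?_
    ext x
    simp
  exact e.rank_eq

/-- rank additivity for `A ≤ S`. -/
lemma quotRank_add_rank {A S : Submodule K V} (h : A ≤ S) :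
    quotRank K V A S + Module.rank K ↥A = Module.rank K ↥S := by
  have e : ↥(A.comap S.subtype) ≃ₗ[K] ↥A := Submodule.comapSubtypeEquivOfLe h
  calc quotRank K V A S + Module.rank K ↥A
      = Module.rank K (↥S ⧸ (A.comap S.subtype)) + Module.rank K ↥(A.comap S.subtype) := by
        rw [quotRank, e.rank_eq]
    _ = Module.rank K ↥S := Submodule.rank_quotient_add_rank _

end QR2

/-- chains of given length for a relation -/
def chain {α : Type*} (R : α → α → Prop) : ℕ → α → α → Prop
  | 0, X, Y => X = Y
  | (n+1), X, Y => ∃ Z, R X Z ∧ chain R n Z Y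

lemma chain_map {α β : Type*} {R : α → α → Prop} {R' : β → β → Prop} (e : α → β)
    (h : ∀ a b, R a b → R' (e a) (e b)) :
    ∀ n (X Y : α), chain R n X Y → chain R' n (e X) (e Y) := by
  intro n
  induction n with
  | zero => intro X Y hXY; exact congrArg e hXY
  | succ n ih =>
    rintro X Y ⟨Z, hXZ, hc⟩
    exact ⟨e Z, h _ _ hXZ, ih _ _ hc⟩

section Chain
variable {K V : Type*} [DivisionRing K] [AddCommGroup V] [Module K V]

lemma cardinal_eq_cast_sub {q : Cardinal} {a s : ℕ} (h : q + a = s) : q = ((s - a : ℕ) : Cardinal) := by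
  have hq : q < Cardinal.aleph0 := by
    have : q ≤ (s : Cardinal) := h ▸ le_self_add
    exact this.trans_lt (Cardinal.nat_lt_aleph0 s)
  obtain ⟨k, rfl⟩ := Cardinal.lt_aleph0.1 hq
  have : ((k + a : ℕ) : Cardinal) = (s : ℕ) := by push_cast; exact h
  have hk : k + a = s := Nat.cast_injective this
  congr 1
  omega

lemma chain_quotRank_le {P : Submodule K V → Prop} :
    ∀ n (X Y : {X : Submodule K V // P X}),
      chain (fun A B : {X : Submodule K V // P X} => Adjacent K V A.1 B.1) n X Y →
      quotRank K V X.1 (X.1 ⊔ Y.1) ≤ n := by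
  intro n
  induction n with
  | zero =>
    rintro X Y rfl
    rw [sup_idem, quotRank_self]
    exact le_refl _
  | succ n ih =>
    rintro X Y ⟨Z, hXZ, hc⟩
    calc quotRank K V X.1 (X.1 ⊔ Y.1)
        ≤ quotRank K V X.1 (X.1 ⊔ Z.1) + quotRank K V Z.1 (Z.1 ⊔ Y.1) := quotRank_triangle _ _ _
      _ ≤ 1 + n := by
          rw [hXZ.1]
          gcongr
          exact ih _ _ hc
      _ = ((n + 1 : ℕ) : Cardinal) := by push_cast; rw [add_comm]

lemma quotRank_eq_cast [FiniteDimensional K V] {A S : Submodule K V} (h : A ≤ S) :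
    quotRank K V A S = ((Module.finrank K ↥S - Module.finrank K ↥A : ℕ) : Cardinal) := by
  refine cardinal_eq_cast_sub ?_
  rw [Module.finrank_eq_rank, Module.finrank_eq_rank]
  exact quotRank_add_rank h

lemma exists_compl_le {W X : Submodule K V} (h : W ≤ X) :
    ∃ C, C ≤ X ∧ W ⊓ C = ⊥ ∧ W ⊔ C = X := by
  obtain ⟨q, hq⟩ := Submodule.exists_isCompl (W.comap X.subtype)
  refine ⟨q.map X.subtype, map_subtype_le _ _, ?_, ?_⟩
  · have hW : W = (W.comap X.subtype).map X.subtype := by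
      rw [Submodule.map_comap_subtype, inf_eq_right.2 h]
    rw [hW, ← Submodule.map_inf _ (Submodule.injective_subtype X),
      disjoint_iff.1 hq.disjoint, Submodule.map_bot]
  · have hW : W = (W.comap X.subtype).map X.subtype := by
      rw [Submodule.map_comap_subtype, inf_eq_right.2 h]
    rw [hW, ← Submodule.map_sup, codisjoint_iff.1 hq.codisjoint, Submodule.map_top,
      Submodule.range_subtype]
end Chain

section Grass
variable {K V : Type*} [DivisionRing K] [AddCommGroup V] [Module K V]
variable [FiniteDimensional K V] {m : ℕ}

lemma finrank_of_inG (hV : Module.finrank K V = 2 * m) {X : Submodule K V}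
    (hX : InG K V X) : Module.finrank K ↥X = m := by
  obtain ⟨e⟩ := hX
  have h1 : Module.finrank K ↥X = Module.finrank K (V ⧸ X) := e.finrank_eq
  have h2 := Submodule.finrank_quotient_add_finrank X
  omega

lemma inG_of_finrank (hV : Module.finrank K V = 2 * m) {X : Submodule K V}
    (hX : Module.finrank K ↥X = m) : InG K V X := by
  have h2 := Submodule.finrank_quotient_add_finrank X
  exact FiniteDimensional.nonempty_linearEquiv_of_finrank_eq (by omega)

lemma buildChain (hV : Module.finrank K V = 2 * m) :
    ∀ (d : ℕ) (X Y : Submodule K V) (hX : InG K V X) (hY : InG K V Y),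
      Module.finrank K ↥(X ⊔ Y) = m + d →
      chain (fun A B : {X : Submodule K V // InG K V X} => Adjacent K V A.1 B.1) d ⟨X, hX⟩ ⟨Y, hY⟩ := by
  intro d
  induction d with
  | zero =>
    intro X Y hX hY hsup
    have hX' : X = X ⊔ Y :=
      Submodule.eq_of_le_of_finrank_eq le_sup_left (by rw [finrank_of_inG hV hX, hsup]; omega)
    have hY' : Y = X ⊔ Y :=
      Submodule.eq_of_le_of_finrank_eq le_sup_right (by rw [finrank_of_inG hV hY, hsup]; omega)
    exact Subtype.ext (hX'.trans hY'.symm)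
  | succ d ih =>
    intro X Y hX hY hsup
    have fX : Module.finrank K ↥X = m := finrank_of_inG hV hX
    have fY : Module.finrank K ↥Y = m := finrank_of_inG hV hY
    set W := X ⊓ Y with hW
    have hsupinf := Submodule.finrank_sup_add_finrank_inf_eq X Y
    rw [← hW] at hsupinf
    have fW : Module.finrank K ↥W + (d + 1) = m := by omega
    -- complement C of W in X
    obtain ⟨C, hCX, hWC_inf, hWC_sup⟩ := exists_compl_le (inf_le_left : W ≤ X)
    have fC : Module.finrank K ↥C = d + 1 := by
      have := Submodule.finrank_sup_add_finrank_inf_eq W C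
      rw [hWC_inf, hWC_sup, finrank_bot] at this
      omega
    -- a nonzero vector c in C
    have hCbot : C ≠ ⊥ := by
      intro h; rw [h, finrank_bot] at fC; omega
    obtain ⟨c, hcC, hc0⟩ := Submodule.exists_mem_ne_zero_of_ne_bot hCbot
    have hspan_le : span K {c} ≤ C := by rwa [span_singleton_le_iff_mem]
    -- complement D of span c in C
    obtain ⟨D, hDC, hD_inf, hD_sup⟩ := exists_compl_le hspan_le
    have fD : Module.finrank K ↥D = d := by
      have := Submodule.finrank_sup_add_finrank_inf_eq (span K {c}) D
      rw [hD_inf, hD_sup, finrank_bot, finrank_span_singleton hc0] at this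
      omega
    -- the hyperplane H of X
    set H := W ⊔ D with hH
    have hHX : H ≤ X := sup_le inf_le_left (hDC.trans hCX)
    have hWD_inf : W ⊓ D = ⊥ := by
      have h1 : W ⊓ D ≤ W ⊓ C := inf_le_inf_left W hDC
      rw [hWC_inf] at h1
      exact le_bot_iff.1 h1
    have fH : Module.finrank K ↥H + 1 = m := by
      have := Submodule.finrank_sup_add_finrank_inf_eq W D
      rw [hWD_inf, finrank_bot, ← hH] at this
      omega
    -- a vector y in Y not in X
    have hYX : ¬ Y ≤ X := by
      intro h
      rw [sup_eq_left.2 h] at hsup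
      omega
    obtain ⟨y, hyY, hyX⟩ := SetLike.not_le_iff_exists.1 hYX
    -- the new subspace Z
    set Z := H ⊔ span K {y} with hZ
    have hHy : H ⊓ span K {y} = ⊥ := by
      rw [disjoint_iff.1 (Submodule.disjoint_span_singleton.2 (fun h => absurd (hHX h) hyX))]
    have fZ : Module.finrank K ↥Z = m := by
      have := Submodule.finrank_sup_add_finrank_inf_eq H (span K {y})
      rw [hHy, finrank_bot, finrank_span_singleton (by rintro rfl; exact hyX X.zero_mem), ← hZ] at this
      omega
    have hZG : InG K V Z := inG_of_finrank hV fZ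
    -- X ⊔ Z = X ⊔ span y, of finrank m + 1
    have hXZ : X ⊔ Z = X ⊔ span K {y} := by
      rw [hZ, ← sup_assoc, sup_eq_left.2 hHX]
    have fXZ : Module.finrank K ↥(X ⊔ Z) = m + 1 := by
      have hXy : X ⊓ span K {y} = ⊥ :=
        disjoint_iff.1 (Submodule.disjoint_span_singleton.2 (fun h => absurd h hyX))
      have := Submodule.finrank_sup_add_finrank_inf_eq X (span K {y})
      rw [hXy, finrank_bot, finrank_span_singleton (by rintro rfl; exact hyX X.zero_mem), ← hXZ] at this
      omega
    -- adjacency of X and Z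
    have hadjXZ : Adjacent K V X Z := by
      constructor
      · rw [quotRank_eq_cast le_sup_left, fXZ, fX]
        norm_num
      · rw [quotRank_eq_cast le_sup_right, fXZ, fZ]
        norm_num
    -- Z ⊔ Y = H ⊔ Y, of finrank m + d
    have hZY : Z ⊔ Y = H ⊔ Y := by
      rw [hZ, sup_assoc, sup_eq_right.2 ((span_singleton_le_iff_mem _ _).2 hyY)]
    have hHY_inf : H ⊓ Y = W := by
      apply le_antisymm
      · exact le_inf (le_trans inf_le_left hHX) inf_le_right
      · exact le_inf le_sup_left inf_le_right
    have fZY : Module.finrank K ↥(Z ⊔ Y) = m + d := by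
      have := Submodule.finrank_sup_add_finrank_inf_eq H Y
      rw [hHY_inf, ← hZY] at this
      omega
    exact ⟨⟨Z, hZG⟩, hadjXZ, ih Z Y hZG hY fZY⟩

end Grass

section IsComplChar
variable {K V : Type*} [DivisionRing K] [AddCommGroup V] [Module K V]
variable [FiniteDimensional K V] {m : ℕ}

lemma isCompl_iff_finrank (hV : Module.finrank K V = 2 * m) {X Y : Submodule K V}
    (hX : InG K V X) (hY : InG K V Y) :
    IsCompl X Y ↔ Module.finrank K ↥(X ⊔ Y) = 2 * m := by
  constructor
  · intro h
    rw [codisjoint_iff.1 h.codisjoint, finrank_top, hV]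
  · intro h
    have hsup : X ⊔ Y = ⊤ := Submodule.eq_top_of_finrank_eq (by rw [h, hV])
    have hinf : X ⊓ Y = ⊥ := by
      have h1 := Submodule.finrank_sup_add_finrank_inf_eq X Y
      rw [h, finrank_of_inG hV hX, finrank_of_inG hV hY] at h1
      exact Submodule.finrank_eq_zero.1 (by omega)
    exact ⟨disjoint_iff.2 hinf, codisjoint_iff.2 hsup⟩

end IsComplChar

/-- Let `dim V = 2m` be finite. Then an isomorphism of Grassmann graphs
(a bijection `φ : 𝒢 → 𝒢'` preserving adjacency in both directions) forces
`dim V' = 2m`, and `φ` is also an isomorphism of distant graphs. -/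
theorem stmt_10 (K V : Type*) [DivisionRing K] [AddCommGroup V] [Module K V]
    (K' V' : Type*) [DivisionRing K'] [AddCommGroup V'] [Module K' V']
    (hG : Nonempty {X : Submodule K V // InG K V X})
    (hG' : Nonempty {X : Submodule K' V' // InG K' V' X})
    (φ : {X : Submodule K V // InG K V X} → {X : Submodule K' V' // InG K' V' X})
    (hbij : Function.Bijective φ)
    (m : ℕ) (hV : Module.rank K V = (2 * m : ℕ))
    (hadj : ∀ X Y : {X : Submodule K V // InG K V X},
      Adjacent K V X.1 Y.1 ↔ Adjacent K' V' (φ X).1 (φ Y).1) :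
    Module.rank K' V' = (2 * m : ℕ) ∧
    ∀ X Y : {X : Submodule K V // InG K V X},
      IsCompl X.1 Y.1 ↔ IsCompl (φ X).1 (φ Y).1 := by
  haveI : FiniteDimensional K V :=
    Module.rank_lt_aleph0_iff.1 (hV ▸ Cardinal.nat_lt_aleph0 _)
  have hVf : Module.finrank K V = 2 * m := Module.finrank_eq_of_rank_eq hV
  set e := Equiv.ofBijective φ hbij with he
  have hes : ∀ y, φ (e.symm y) = y := fun y => e.apply_symm_apply y
  -- transfer of adjacency
  have hfwd : ∀ A B : {X : Submodule K V // InG K V X},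
      Adjacent K V A.1 B.1 → Adjacent K' V' (φ A).1 (φ B).1 := fun A B h => (hadj A B).1 h
  have hbwd : ∀ A B : {X : Submodule K' V' // InG K' V' X},
      Adjacent K' V' A.1 B.1 → Adjacent K V (e.symm A).1 (e.symm B).1 := by
    intro A B h
    refine (hadj (e.symm A) (e.symm B)).2 ?_
    rwa [hes A, hes B]
  -- Step C: V' is finite dimensional of dimension 2 m' with m' ≤ m
  obtain ⟨X₀⟩ := hG
  obtain ⟨W', hW'⟩ := Submodule.exists_isCompl (φ X₀).1
  obtain ⟨eX⟩ := (φ X₀).2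
  have e1 : (V' ⧸ (φ X₀).1) ≃ₗ[K'] ↥W' := Submodule.quotientEquivOfIsCompl _ _ hW'
  have e2 : (V' ⧸ W') ≃ₗ[K'] ↥(φ X₀).1 := Submodule.quotientEquivOfIsCompl _ _ hW'.symm
  have hW'G : InG K' V' W' := ⟨e1.symm.trans (eX.symm.trans e2.symm)⟩
  set Y₀ := e.symm ⟨W', hW'G⟩ with hY₀
  have hφY₀ : φ Y₀ = ⟨W', hW'G⟩ := hes _
  have hsup_le : Module.finrank K ↥(X₀.1 ⊔ Y₀.1) ≤ 2 * m := hVf ▸ Submodule.finrank_le _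
  have hsup_ge : m ≤ Module.finrank K ↥(X₀.1 ⊔ Y₀.1) := by
    have h1 : Module.finrank K ↥X₀.1 ≤ Module.finrank K ↥(X₀.1 ⊔ Y₀.1) :=
      Submodule.finrank_mono le_sup_left
    rw [finrank_of_inG hVf X₀.2] at h1
    exact h1
  set d₀ := Module.finrank K ↥(X₀.1 ⊔ Y₀.1) - m with hd₀def
  have hd₀ : Module.finrank K ↥(X₀.1 ⊔ Y₀.1) = m + d₀ := by omega
  have hd₀m : d₀ ≤ m := by omega
  have hc₀ : chain (fun A B : {X : Submodule K V // InG K V X} => Adjacent K V A.1 B.1)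
      d₀ X₀ Y₀ := buildChain hVf d₀ X₀.1 Y₀.1 X₀.2 Y₀.2 hd₀
  have hc₀' := chain_map (R' := fun A B : {X : Submodule K' V' // InG K' V' X} => Adjacent K' V' A.1 B.1) φ hfwd d₀ X₀ Y₀ hc₀
  have hbound := chain_quotRank_le d₀ (φ X₀) (φ Y₀) hc₀'
  rw [hφY₀] at hbound
  have hsup_top : (φ X₀).1 ⊔ W' = ⊤ := codisjoint_iff.1 hW'.codisjoint
  rw [hsup_top, quotRank_top] at hbound
  have hrk_quot_le : Module.rank K' (V' ⧸ (φ X₀).1) ≤ (m : Cardinal) :=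
    hbound.trans (by exact_mod_cast hd₀m)
  have hrkV' : Module.rank K' V' < Cardinal.aleph0 := by
    have h1 := Submodule.rank_quotient_add_rank (φ X₀).1
    have h2 : Module.rank K' ↥(φ X₀).1 = Module.rank K' (V' ⧸ (φ X₀).1) := eX.rank_eq
    calc Module.rank K' V' = Module.rank K' (V' ⧸ (φ X₀).1) + Module.rank K' ↥(φ X₀).1 := h1.symm
      _ ≤ (m : Cardinal) + (m : Cardinal) := by rw [h2]; gcongr
      _ < Cardinal.aleph0 := by
          exact_mod_cast Cardinal.nat_lt_aleph0 (m + m)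
  haveI : FiniteDimensional K' V' := Module.rank_lt_aleph0_iff.1 hrkV'
  set m' := Module.finrank K' ↥(φ X₀).1 with hm'def
  have hV'f : Module.finrank K' V' = 2 * m' := by
    have h1 := Submodule.finrank_quotient_add_finrank (φ X₀).1
    have h2 : Module.finrank K' ↥(φ X₀).1 = Module.finrank K' (V' ⧸ (φ X₀).1) := eX.finrank_eq
    omega
  have hm'_le : m' ≤ m := by
    have h2 : Module.finrank K' ↥(φ X₀).1 = Module.finrank K' (V' ⧸ (φ X₀).1) := eX.finrank_eq
    have h3 : ((Module.finrank K' (V' ⧸ (φ X₀).1) : ℕ) : Cardinal) ≤ (m : Cardinal) := by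
      rw [Module.finrank_eq_rank]
      exact hrk_quot_le
    have := (Nat.cast_le (α := Cardinal)).1 h3
    omega
  -- Step D: m ≤ m'
  obtain ⟨C₁, hC₁⟩ := Submodule.exists_isCompl X₀.1
  have fC₁ : Module.finrank K ↥C₁ = m := by
    have := Submodule.finrank_add_eq_of_isCompl hC₁
    have fX₀ := finrank_of_inG hVf X₀.2
    omega
  have hC₁G : InG K V C₁ := inG_of_finrank hVf fC₁
  set Y₁ : {X : Submodule K V // InG K V X} := ⟨C₁, hC₁G⟩ with hY₁
  have hm_le : m ≤ m' := by
    have hsup_le' : Module.finrank K' ↥((φ X₀).1 ⊔ (φ Y₁).1) ≤ 2 * m' :=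
      hV'f ▸ Submodule.finrank_le _
    have hsup_ge' : m' ≤ Module.finrank K' ↥((φ X₀).1 ⊔ (φ Y₁).1) := by
      have h1 : Module.finrank K' ↥(φ X₀).1 ≤ Module.finrank K' ↥((φ X₀).1 ⊔ (φ Y₁).1) :=
        Submodule.finrank_mono le_sup_left
      omega
    set d₁ := Module.finrank K' ↥((φ X₀).1 ⊔ (φ Y₁).1) - m' with hd₁def
    have hd₁ : Module.finrank K' ↥((φ X₀).1 ⊔ (φ Y₁).1) = m' + d₁ := by omega
    have hd₁m : d₁ ≤ m' := by omega
    have hc₁ : chain (fun A B : {X : Submodule K' V' // InG K' V' X} => Adjacent K' V' A.1 B.1)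
        d₁ (φ X₀) (φ Y₁) := buildChain hV'f d₁ (φ X₀).1 (φ Y₁).1 (φ X₀).2 (φ Y₁).2 hd₁
    have hc₁' := chain_map (R' := fun A B : {X : Submodule K V // InG K V X} => Adjacent K V A.1 B.1) e.symm hbwd d₁ (φ X₀) (φ Y₁) hc₁
    have hXe : e.symm (φ X₀) = X₀ := e.symm_apply_apply X₀
    have hYe : e.symm (φ Y₁) = Y₁ := e.symm_apply_apply Y₁
    rw [hXe, hYe] at hc₁'
    have hbound₁ := chain_quotRank_le d₁ X₀ Y₁ hc₁'
    have hsup_top₁ : X₀.1 ⊔ Y₁.1 = ⊤ := codisjoint_iff.1 hC₁.codisjoint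
    rw [hsup_top₁, quotRank_top] at hbound₁
    have hq : Module.rank K (V ⧸ X₀.1) = (m : Cardinal) := by
      rw [← Module.finrank_eq_rank]
      have h1 := Submodule.finrank_quotient_add_finrank X₀.1
      have fX₀ := finrank_of_inG hVf X₀.2
      norm_cast
      omega
    rw [hq] at hbound₁
    exact_mod_cast hbound₁.trans ((Nat.cast_le (α := Cardinal)).2 hd₁m)
  have hm : m' = m := le_antisymm hm'_le hm_le
  rw [hm] at hV'f
  constructor
  · rw [← Module.finrank_eq_rank, hV'f]
  -- Step E: distance preservation
  intro X Y
  have fsupXY_le : Module.finrank K ↥(X.1 ⊔ Y.1) ≤ 2 * m := hVf ▸ Submodule.finrank_le _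
  have fsupXY_ge : m ≤ Module.finrank K ↥(X.1 ⊔ Y.1) := by
    have h1 : Module.finrank K ↥X.1 ≤ Module.finrank K ↥(X.1 ⊔ Y.1) :=
      Submodule.finrank_mono le_sup_left
    rw [finrank_of_inG hVf X.2] at h1
    exact h1
  set dX := Module.finrank K ↥(X.1 ⊔ Y.1) - m with hdXdef
  have hdX : Module.finrank K ↥(X.1 ⊔ Y.1) = m + dX := by omega
  have fsup'_ge : m ≤ Module.finrank K' ↥((φ X).1 ⊔ (φ Y).1) := by
    have h1 : Module.finrank K' ↥(φ X).1 ≤ Module.finrank K' ↥((φ X).1 ⊔ (φ Y).1) :=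
      Submodule.finrank_mono le_sup_left
    rw [finrank_of_inG hV'f (φ X).2] at h1
    exact h1
  set dX' := Module.finrank K' ↥((φ X).1 ⊔ (φ Y).1) - m with hdX'def
  have hdX' : Module.finrank K' ↥((φ X).1 ⊔ (φ Y).1) = m + dX' := by omega
  -- dX' ≤ dX
  have hle1 : dX' ≤ dX := by
    have hc := buildChain hVf dX X.1 Y.1 X.2 Y.2 hdX
    have hc' := chain_map (R' := fun A B : {X : Submodule K' V' // InG K' V' X} => Adjacent K' V' A.1 B.1) φ hfwd dX X Y hc
    have hbound := chain_quotRank_le dX (φ X) (φ Y) hc'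
    rw [quotRank_eq_cast le_sup_left, hdX', finrank_of_inG hV'f (φ X).2] at hbound
    have : ((m + dX' - m : ℕ) : Cardinal) ≤ ((dX : ℕ) : Cardinal) := hbound
    have h2 := (Nat.cast_le (α := Cardinal)).1 this
    omega
  -- dX ≤ dX'
  have hle2 : dX ≤ dX' := by
    have hc := buildChain hV'f dX' (φ X).1 (φ Y).1 (φ X).2 (φ Y).2 hdX'
    have hc' := chain_map (R' := fun A B : {X : Submodule K V // InG K V X} => Adjacent K V A.1 B.1) e.symm hbwd dX' (φ X) (φ Y) hc
    have hXe : e.symm (φ X) = X := e.symm_apply_apply X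
    have hYe : e.symm (φ Y) = Y := e.symm_apply_apply Y
    rw [hXe, hYe] at hc'
    have hbound := chain_quotRank_le dX' X Y hc'
    rw [quotRank_eq_cast le_sup_left, hdX, finrank_of_inG hVf X.2] at hbound
    have : ((m + dX - m : ℕ) : Cardinal) ≤ ((dX' : ℕ) : Cardinal) := hbound
    have h2 := (Nat.cast_le (α := Cardinal)).1 this
    omega
  have hdd : dX = dX' := le_antisymm hle2 hle1
  rw [isCompl_iff_finrank hVf X.2 Y.2, isCompl_iff_finrank hV'f (φ X).2 (φ Y).2, hdX, hdX']
  omega
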